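/- arXiv:2004.06022 — 2 statements merged into one kernel-verified Lean document; each statement's English description precedes it below -/
import Mathlib

section
/- Combining the IPCW identities: under conditional independence of T and C given Z, independence of C and Z, positivity of G on [0,t₀], and the quantile model λ = P(t₀ − T ≤ exp(β'Z) | T ≤ t₀, Z) a.s., one has E[ Z · (1{Y ≤ t₀, Δ=1}/G(Y)) · ( λ − 1{log(t₀ − Y) ≤ β'Z} ) ] = 0, where Y = min(T,C) and Δ = 1{T ≤ C}. -/
open MeasureTheory ProbabilityTheory
open scoped Classical

theorem aux_indep {Ω : Type*} [mΩ : MeasurableSpace Ω] [StandardBorelSpace Ω]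
    (μ : Measure Ω) [IsProbabilityMeasure μ] {p : ℕ}
    (T C : Ω → ℝ) (Z : Ω → Fin p → ℝ)
    (hT : Measurable T) (hC : Measurable C) (hZ : Measurable Z)
    (hCI : CondIndepFun (MeasurableSpace.comap Z inferInstance) hZ.comap_le T C μ)
    (hCZ : IndepFun C Z μ) :
    IndepFun C (fun ω => (T ω, Z ω)) μ := by
  have hmZle : MeasurableSpace.comap Z inferInstance ≤ mΩ := hZ.comap_le
  have hCI' := (condIndepFun_iff_condExp_inter_preimage_eq_mul (hm' := hmZle) hT hC).mp hCI
  -- condexp of C-indicators given Z is constant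
  have hCc : ∀ u : Set ℝ, MeasurableSet u →
      (μ⟦C ⁻¹' u | MeasurableSpace.comap Z inferInstance⟧)
        =ᵐ[μ] fun _ => (μ (C ⁻¹' u)).toReal := by
    intro u hu
    have h1 : StronglyMeasurable[MeasurableSpace.comap C inferInstance]
        (Set.indicator (C ⁻¹' u) (fun _ => (1 : ℝ))) :=
      stronglyMeasurable_const.indicator ⟨u, hu, rfl⟩
    have h2 : Indep (MeasurableSpace.comap C inferInstance)
        (MeasurableSpace.comap Z inferInstance) μ := hCZ
    have h3 := condExp_indep_eq (μ := μ) hC.comap_le hmZle h1 h2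
    have h4 : ∫ x, (C ⁻¹' u).indicator (fun _ => (1:ℝ)) x ∂μ = (μ (C ⁻¹' u)).toReal := by
      exact integral_indicator_one (μ := μ) (hC hu)
    refine h3.trans ?_
    simp only [h4]
    exact Filter.EventuallyEq.rfl
  -- key product formula
  have hkey : ∀ (u v : Set ℝ) (w : Set (Fin p → ℝ)), MeasurableSet u → MeasurableSet v →
      MeasurableSet w →
      μ (C ⁻¹' u ∩ (T ⁻¹' v ∩ Z ⁻¹' w)) = μ (C ⁻¹' u) * μ (T ⁻¹' v ∩ Z ⁻¹' w) := by
    intro u v w hu hv hw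
    have hS : MeasurableSet[MeasurableSpace.comap Z inferInstance] (Z ⁻¹' w) := ⟨w, hw, rfl⟩
    have hA : MeasurableSet (T ⁻¹' v ∩ C ⁻¹' u) := (hT hv).inter (hC hu)
    have hintInd : Integrable (Set.indicator (T ⁻¹' v ∩ C ⁻¹' u) (fun _ => (1:ℝ))) μ :=
      (integrable_const (1:ℝ)).indicator hA
    have hintT : Integrable (Set.indicator (T ⁻¹' v) (fun _ => (1:ℝ))) μ :=
      (integrable_const (1:ℝ)).indicator (hT hv)
    have e1 : ∫ ω in Z ⁻¹' w, Set.indicator (T ⁻¹' v ∩ C ⁻¹' u) (fun _ => (1:ℝ)) ω ∂μ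
        = (μ (C ⁻¹' u ∩ (T ⁻¹' v ∩ Z ⁻¹' w))).toReal := by
      have := integral_indicator_one (μ := μ.restrict (Z ⁻¹' w)) hA
      rw [measureReal_def, Measure.restrict_apply hA] at this
      rw [show (T ⁻¹' v ∩ C ⁻¹' u) ∩ Z ⁻¹' w = C ⁻¹' u ∩ (T ⁻¹' v ∩ Z ⁻¹' w) by
        ext x; simp only [Set.mem_inter_iff]; tauto] at this
      exact this
    have e2 := setIntegral_condExp hmZle hintInd hS
    have e3 : (μ⟦T ⁻¹' v ∩ C ⁻¹' u | MeasurableSpace.comap Z inferInstance⟧)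
        =ᵐ[μ] fun ω => (μ⟦T ⁻¹' v | MeasurableSpace.comap Z inferInstance⟧) ω
          * (μ (C ⁻¹' u)).toReal := by
      refine (hCI' v u hv hu).trans ?_
      filter_upwards [hCc u hu] with ω hω
      rw [hω]
    have e4 : ∫ ω in Z ⁻¹' w,
        (μ⟦T ⁻¹' v ∩ C ⁻¹' u | MeasurableSpace.comap Z inferInstance⟧) ω ∂μ
        = ∫ ω in Z ⁻¹' w,
          ((μ⟦T ⁻¹' v | MeasurableSpace.comap Z inferInstance⟧) ω
            * (μ (C ⁻¹' u)).toReal) ∂μ :=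
      integral_congr_ae (Filter.EventuallyEq.restrict e3)
    have e5 : ∫ ω in Z ⁻¹' w,
          ((μ⟦T ⁻¹' v | MeasurableSpace.comap Z inferInstance⟧) ω
            * (μ (C ⁻¹' u)).toReal) ∂μ
        = (∫ ω in Z ⁻¹' w,
            (μ⟦T ⁻¹' v | MeasurableSpace.comap Z inferInstance⟧) ω ∂μ)
          * (μ (C ⁻¹' u)).toReal := integral_mul_const _ _
    have e6 := setIntegral_condExp hmZle hintT hS
    have e7 : ∫ ω in Z ⁻¹' w, Set.indicator (T ⁻¹' v) (fun _ => (1:ℝ)) ω ∂μ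
        = (μ (T ⁻¹' v ∩ Z ⁻¹' w)).toReal := by
      have := integral_indicator_one (μ := μ.restrict (Z ⁻¹' w)) (hT hv)
      rw [measureReal_def, Measure.restrict_apply (hT hv)] at this
      exact this
    have hfin : (μ (C ⁻¹' u ∩ (T ⁻¹' v ∩ Z ⁻¹' w))).toReal
        = ((μ (C ⁻¹' u)) * (μ (T ⁻¹' v ∩ Z ⁻¹' w))).toReal := by
      rw [ENNReal.toReal_mul]
      calc (μ (C ⁻¹' u ∩ (T ⁻¹' v ∩ Z ⁻¹' w))).toReal
          = ∫ ω in Z ⁻¹' w, Set.indicator (T ⁻¹' v ∩ C ⁻¹' u) (fun _ => (1:ℝ)) ω ∂μ := e1.symm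
        _ = ∫ ω in Z ⁻¹' w,
              (μ⟦T ⁻¹' v ∩ C ⁻¹' u | MeasurableSpace.comap Z inferInstance⟧) ω ∂μ := e2.symm
        _ = (∫ ω in Z ⁻¹' w,
              (μ⟦T ⁻¹' v | MeasurableSpace.comap Z inferInstance⟧) ω ∂μ)
            * (μ (C ⁻¹' u)).toReal := by rw [e4, e5]
        _ = (μ (T ⁻¹' v ∩ Z ⁻¹' w)).toReal * (μ (C ⁻¹' u)).toReal := by rw [e6, e7]
        _ = (μ (C ⁻¹' u)).toReal * (μ (T ⁻¹' v ∩ Z ⁻¹' w)).toReal := by ring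
    exact (ENNReal.toReal_eq_toReal_iff' (measure_ne_top μ _)
      (ENNReal.mul_ne_top (measure_ne_top μ _) (measure_ne_top μ _))).mp hfin
  -- now build independence via π-systems
  have hIndep : Indep (MeasurableSpace.comap C inferInstance)
      (MeasurableSpace.comap (fun ω => (T ω, Z ω)) inferInstance) μ := by
    refine IndepSets.indep (hC.comap_le) ((hT.prodMk hZ).comap_le)
      (p1 := {s | MeasurableSet[MeasurableSpace.comap C inferInstance] s})
      (p2 := {s | ∃ v w, MeasurableSet v ∧ MeasurableSet w ∧ s = T ⁻¹' v ∩ Z ⁻¹' w})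
      ?_ ?_ ?_ ?_ ?_
    · exact @MeasurableSpace.isPiSystem_measurableSet Ω (MeasurableSpace.comap C inferInstance)
    · rintro s ⟨v₁, w₁, hv₁, hw₁, rfl⟩ t ⟨v₂, w₂, hv₂, hw₂, rfl⟩ -
      exact ⟨v₁ ∩ v₂, w₁ ∩ w₂, hv₁.inter hv₂, hw₁.inter hw₂, by
        ext x; simp only [Set.mem_inter_iff, Set.mem_preimage]; tauto⟩
    · exact (@MeasurableSpace.generateFrom_measurableSet Ω (MeasurableSpace.comap C inferInstance)).symm
    · rw [show (inferInstance : MeasurableSpace (ℝ × (Fin p → ℝ)))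
          = Prod.instMeasurableSpace from rfl, ← generateFrom_prod,
        MeasurableSpace.comap_generateFrom]
      congr 1
      ext s
      constructor
      · rintro ⟨_, ⟨v, hv, w, hw, rfl⟩, rfl⟩
        exact ⟨v, w, hv, hw, (Set.mk_preimage_prod T Z).symm⟩
      · rintro ⟨v, w, hv, hw, rfl⟩
        exact ⟨v ×ˢ w, Set.mem_image2_of_mem hv hw, Set.mk_preimage_prod T Z⟩
    · intro t1 t2 ht1 ht2
      obtain ⟨u, hu, rfl⟩ := MeasurableSpace.measurableSet_comap.mp ht1
      obtain ⟨v, w, hv, hw, rfl⟩ := ht2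
      simp only [Kernel.const_apply, ae_dirac_eq, Filter.eventually_pure]
      exact hkey u v w hu hv hw
  exact hIndep


noncomputable def auxH (G : ℝ → ℝ) (t₀ l : ℝ) {p : ℕ} (β : Fin p → ℝ)
    (w : ℝ × (Fin p → ℝ)) : Fin p → ℝ :=
  ((if w.1 ≤ t₀ then 1 / G w.1 else 0)
    * (l - if t₀ - w.1 ≤ Real.exp (∑ i, β i * w.2 i) then 1 else 0)) • w.2

noncomputable def auxF (G : ℝ → ℝ) (t₀ l : ℝ) {p : ℕ} (β : Fin p → ℝ)
    (q : (ℝ × (Fin p → ℝ)) × ℝ) : Fin p → ℝ :=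
  (if q.1.1 ≤ q.2 then (1:ℝ) else 0) • auxH G t₀ l β q.1

theorem measurable_scalar {p : ℕ} (β : Fin p → ℝ) (t₀ : ℝ) :
    Measurable (fun w : ℝ × (Fin p → ℝ) => Real.exp (∑ i, β i * w.2 i)) :=
  Real.measurable_exp.comp (Finset.measurable_sum _ fun i _ =>
    measurable_const.mul ((measurable_pi_apply i).comp measurable_snd))

theorem measurable_auxH (G : ℝ → ℝ) (hG : Measurable G) (t₀ l : ℝ) {p : ℕ} (β : Fin p → ℝ) :
    Measurable (auxH G t₀ l β) := by
  rw [measurable_pi_iff]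
  intro i
  simp only [auxH, Pi.smul_apply, smul_eq_mul]
  refine Measurable.mul (Measurable.mul ?_ ?_) ((measurable_pi_apply i).comp measurable_snd)
  · refine Measurable.ite (measurableSet_le measurable_fst measurable_const) ?_ measurable_const
    simp only [one_div]
    exact (hG.comp measurable_fst).inv
  · refine Measurable.sub measurable_const ?_
    exact Measurable.ite
      (measurableSet_le (measurable_const.sub measurable_fst) (measurable_scalar β t₀))
      measurable_const measurable_const

theorem measurable_auxF (G : ℝ → ℝ) (hG : Measurable G) (t₀ l : ℝ) {p : ℕ} (β : Fin p → ℝ) :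
    Measurable (auxF G t₀ l β) := by
  rw [measurable_pi_iff]
  intro i
  simp only [auxF, Pi.smul_apply, smul_eq_mul]
  refine Measurable.mul ?_ ((measurable_pi_iff.mp
    ((measurable_auxH G hG t₀ l β).comp measurable_fst)) i)
  exact Measurable.ite
    (measurableSet_le (measurable_fst.comp measurable_fst) measurable_snd)
    measurable_const measurable_const


/-- Combining the IPCW identities: under conditional independence of `T` and
`C` given `Z`, independence of `C` and `Z`, positivity of `G` on `[0,t₀]`, and the
conditional quantile model, the population estimating function vanishes:
`E[ Z · (1{Y ≤ t₀, Δ=1}/G(Y)) · ( λ − 1{t₀ − Y ≤ exp(β'Z)} ) ] = 0`,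
where `Y = min(T,C)` and `Δ = 1{T ≤ C}`. -/
theorem stmt5 {Ω : Type*} [MeasurableSpace Ω] [StandardBorelSpace Ω] [Nonempty Ω]
    (μ : Measure Ω) [IsProbabilityMeasure μ] {p : ℕ}
    (T C : Ω → ℝ) (Z : Ω → Fin p → ℝ)
    (hT : Measurable T) (hC : Measurable C) (hZ : Measurable Z)
    (Y : Ω → ℝ) (hY : ∀ ω, Y ω = min (T ω) (C ω))
    (Δ : Ω → Prop) (hΔ : ∀ ω, Δ ω ↔ T ω ≤ C ω)
    (G : ℝ → ℝ) (hG : ∀ t, G t = (μ {ω | t ≤ C ω}).toReal)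
    (t₀ : ℝ) (l : ℝ) (hl : l ∈ Set.Ioo (0 : ℝ) 1) (β : Fin p → ℝ)
    (hCI : CondIndepFun (MeasurableSpace.comap Z inferInstance) hZ.comap_le T C μ)
    (hCZ : IndepFun C Z μ)
    (hpos : ∀ t ≤ t₀, 0 < G t)
    (hint : Integrable (fun ω => ‖Z ω‖ / G (Y ω)) μ)
    (hmodel : (μ[Set.indicator {ω' | t₀ - T ω' ≤ Real.exp (∑ i, β i * Z ω' i) ∧ T ω' ≤ t₀}
          (fun _ => (1 : ℝ)) | MeasurableSpace.comap Z inferInstance])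
        =ᵐ[μ] fun ω => l * (μ[Set.indicator {ω' | T ω' ≤ t₀} (fun _ => (1 : ℝ)) |
          MeasurableSpace.comap Z inferInstance]) ω) :
    ∫ ω, ((if Y ω ≤ t₀ ∧ Δ ω then 1 / G (Y ω) else 0)
          * (l - if t₀ - Y ω ≤ Real.exp (∑ i, β i * Z ω i) then 1 else 0)) • Z ω ∂μ
      = 0 := by
  obtain ⟨hl0, hl1⟩ := hl
  have hGmeas : Measurable G := by
    have hanti : Antitone G := fun a b hab => by
      rw [hG a, hG b]
      exact ENNReal.toReal_mono (measure_ne_top _ _)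
        (measure_mono (fun ω h => le_trans hab h))
    exact hanti.measurable
  have hG0 : ∀ t, 0 ≤ G t := fun t => by rw [hG t]; exact ENNReal.toReal_nonneg
  have hG1 : ∀ t, G t ≤ 1 := fun t => by
    rw [hG t]
    exact ENNReal.toReal_le_of_le_ofReal zero_le_one (by simpa using prob_le_one)
  have habs : ∀ b : ℝ, b = 0 ∨ b = 1 → |l - b| ≤ 1 := by
    rintro b (rfl | rfl) <;> rw [abs_le] <;> constructor <;> linarith
  -- the integrand as a composition
  have hfF : ∀ ω, ((if Y ω ≤ t₀ ∧ Δ ω then 1 / G (Y ω) else 0)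
          * (l - if t₀ - Y ω ≤ Real.exp (∑ i, β i * Z ω i) then 1 else 0)) • Z ω
        = auxF G t₀ l β ((T ω, Z ω), C ω) := by
    intro ω
    by_cases hTC : T ω ≤ C ω
    · have hYT : Y ω = T ω := by rw [hY ω]; exact min_eq_left hTC
      simp only [auxF, auxH, hYT, hΔ ω, hTC, and_true, if_true, one_smul]
    · have : ¬ (Y ω ≤ t₀ ∧ Δ ω) := fun h => hTC ((hΔ ω).mp h.2)
      simp only [auxF, this, if_neg hTC, if_false, zero_mul, zero_smul, smul_zero]
  -- measurability & integrability of the integrand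
  have hW : Measurable (fun ω => (T ω, Z ω)) := hT.prodMk hZ
  have hfF' : (fun ω => ((if Y ω ≤ t₀ ∧ Δ ω then 1 / G (Y ω) else 0)
          * (l - if t₀ - Y ω ≤ Real.exp (∑ i, β i * Z ω i) then 1 else 0)) • Z ω)
      = fun ω => auxF G t₀ l β ((T ω, Z ω), C ω) := funext hfF
  have hfmeas : Measurable (fun ω => ((if Y ω ≤ t₀ ∧ Δ ω then 1 / G (Y ω) else 0)
          * (l - if t₀ - Y ω ≤ Real.exp (∑ i, β i * Z ω i) then 1 else 0)) • Z ω) := by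
    rw [hfF']
    exact (measurable_auxF G hGmeas t₀ l β).comp (hW.prodMk hC)
  have hbound : ∀ ω, ‖((if Y ω ≤ t₀ ∧ Δ ω then 1 / G (Y ω) else 0)
          * (l - if t₀ - Y ω ≤ Real.exp (∑ i, β i * Z ω i) then 1 else 0)) • Z ω‖
        ≤ ‖‖Z ω‖ / G (Y ω)‖ := by
    intro ω
    rw [norm_smul, Real.norm_eq_abs (‖Z ω‖ / G (Y ω)),
      abs_of_nonneg (div_nonneg (norm_nonneg _) (hG0 _))]
    by_cases hcond : Y ω ≤ t₀ ∧ Δ ω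
    · rw [if_pos hcond]
      have hGY : 0 < G (Y ω) := hpos _ hcond.1
      have h1 : ‖1 / G (Y ω) * (l - if t₀ - Y ω ≤ Real.exp (∑ i, β i * Z ω i) then 1 else 0)‖
          ≤ 1 / G (Y ω) := by
        rw [Real.norm_eq_abs, abs_mul, abs_of_nonneg (by positivity : (0:ℝ) ≤ 1 / G (Y ω))]
        calc 1 / G (Y ω) * |l - if t₀ - Y ω ≤ Real.exp (∑ i, β i * Z ω i) then 1 else 0|
            ≤ 1 / G (Y ω) * 1 :=
              mul_le_mul_of_nonneg_left (habs _ (by split <;> simp)) (by positivity)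
          _ = 1 / G (Y ω) := mul_one _
      calc ‖1 / G (Y ω) * (l - if t₀ - Y ω ≤ Real.exp (∑ i, β i * Z ω i) then 1 else 0)‖ * ‖Z ω‖
          ≤ 1 / G (Y ω) * ‖Z ω‖ := mul_le_mul_of_nonneg_right h1 (norm_nonneg _)
        _ = ‖Z ω‖ / G (Y ω) := one_div_mul_eq_div _ _
    · rw [if_neg hcond, zero_mul, norm_zero, zero_mul]
      exact div_nonneg (norm_nonneg _) (hG0 _)
  have hfint : Integrable (fun ω => ((if Y ω ≤ t₀ ∧ Δ ω then 1 / G (Y ω) else 0)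
          * (l - if t₀ - Y ω ≤ Real.exp (∑ i, β i * Z ω i) then 1 else 0)) • Z ω) μ :=
    hint.mono hfmeas.aestronglyMeasurable (Filter.Eventually.of_forall hbound)
  -- independence and mapping to the product measure
  have hIndep : IndepFun (fun ω => (T ω, Z ω)) C μ :=
    (aux_indep μ T C Z hT hC hZ hCI hCZ).symm
  have hmap : μ.map (fun ω => ((T ω, Z ω), C ω))
      = (μ.map (fun ω => (T ω, Z ω))).prod (μ.map C) :=
    (indepFun_iff_map_prod_eq_prod_map_map hW.aemeasurable hC.aemeasurable).mp hIndep
  have hFint : Integrable (auxF G t₀ l β)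
      ((μ.map (fun ω => (T ω, Z ω))).prod (μ.map C)) := by
    rw [← hmap, integrable_map_measure (measurable_auxF G hGmeas t₀ l β).aestronglyMeasurable
      (hW.prodMk hC).aemeasurable]
    exact hfint.congr (Filter.Eventually.of_forall hfF)
  have step1 : ∫ ω, ((if Y ω ≤ t₀ ∧ Δ ω then 1 / G (Y ω) else 0)
          * (l - if t₀ - Y ω ≤ Real.exp (∑ i, β i * Z ω i) then 1 else 0)) • Z ω ∂μ
      = ∫ q, auxF G t₀ l β q ∂((μ.map (fun ω => (T ω, Z ω))).prod (μ.map C)) := by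
    rw [← hmap, integral_map (hW.prodMk hC).aemeasurable
      (measurable_auxF G hGmeas t₀ l β).aestronglyMeasurable]
    exact integral_congr_ae (Filter.Eventually.of_forall hfF)
  have step2 : ∫ q, auxF G t₀ l β q ∂((μ.map (fun ω => (T ω, Z ω))).prod (μ.map C))
      = ∫ w, ∫ c, auxF G t₀ l β (w, c) ∂(μ.map C) ∂(μ.map (fun ω => (T ω, Z ω))) :=
    integral_prod _ hFint
  have step3 : ∀ w : ℝ × (Fin p → ℝ),
      ∫ c, auxF G t₀ l β (w, c) ∂(μ.map C) = G w.1 • auxH G t₀ l β w := by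
    intro w
    have e0 : (fun c => auxF G t₀ l β (w, c))
        = fun c => (if w.1 ≤ c then (1:ℝ) else 0) • auxH G t₀ l β w := rfl
    rw [e0, integral_smul_const]
    congr 1
    have e1 : (fun c => if w.1 ≤ c then (1:ℝ) else 0)
        = Set.indicator (Set.Ici w.1) (fun _ => (1:ℝ)) := by
      funext c
      rw [Set.indicator_apply]
      simp [Set.mem_Ici]
    rw [e1]
    have e2 := integral_indicator_one (μ := μ.map C) (measurableSet_Ici (a := w.1))
    rw [show (Set.indicator (Set.Ici w.1) (fun _ => (1:ℝ)))
        = Set.indicator (Set.Ici w.1) 1 from rfl, e2,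
      measureReal_def, Measure.map_apply hC measurableSet_Ici, hG]
    rfl
  -- step 4: back to Ω
  have hmeasGH : Measurable (fun w : ℝ × (Fin p → ℝ) => G w.1 • auxH G t₀ l β w) := by
    rw [measurable_pi_iff]
    intro i
    simp only [Pi.smul_apply, smul_eq_mul]
    exact (hGmeas.comp measurable_fst).mul
      (measurable_pi_iff.mp (measurable_auxH G hGmeas t₀ l β) i)
  have step4 : ∫ w, G w.1 • auxH G t₀ l β w ∂(μ.map (fun ω => (T ω, Z ω)))
      = ∫ ω, G (T ω) • auxH G t₀ l β (T ω, Z ω) ∂μ :=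
    integral_map hW.aemeasurable hmeasGH.aestronglyMeasurable
  -- step 5: cancel G
  have step5 : ∀ ω, G (T ω) • auxH G t₀ l β (T ω, Z ω)
      = ((if T ω ≤ t₀ then (1:ℝ) else 0)
          * (l - if t₀ - T ω ≤ Real.exp (∑ i, β i * Z ω i) then 1 else 0)) • Z ω := by
    intro ω
    by_cases h0 : T ω ≤ t₀
    · simp only [auxH, if_pos h0, smul_smul]
      congr 1
      have hne : G (T ω) ≠ 0 := (hpos _ h0).ne'
      field_simp
    · simp only [auxH, if_neg h0, zero_mul, zero_smul, smul_zero]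
  -- conditional expectation part
  have hmZle : MeasurableSpace.comap Z inferInstance ≤ ‹MeasurableSpace Ω› := hZ.comap_le
  have mA : MeasurableSet {ω' | T ω' ≤ t₀} := measurableSet_le hT measurable_const
  have mB : MeasurableSet {ω' | t₀ - T ω' ≤ Real.exp (∑ i, β i * Z ω' i) ∧ T ω' ≤ t₀} := by
    rw [Set.setOf_and]
    exact (measurableSet_le (measurable_const.sub hT)
      (Real.measurable_exp.comp (Finset.measurable_sum _ fun i _ =>
        measurable_const.mul ((measurable_pi_apply i).comp hZ)))).inter
      (measurableSet_le hT measurable_const)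
  have hZsm : ∀ i : Fin p, StronglyMeasurable[MeasurableSpace.comap Z inferInstance]
      (fun ω => Z ω i) := by
    intro i
    have hZm : Measurable[MeasurableSpace.comap Z inferInstance] Z := fun s hs =>
      MeasurableSpace.measurableSet_comap.mpr ⟨s, hs, rfl⟩
    exact ((measurable_pi_apply i).comp hZm).stronglyMeasurable
  have hindA : Integrable (fun ω => l * Set.indicator {ω' | T ω' ≤ t₀} (fun _ => (1:ℝ)) ω) μ :=
    ((integrable_const (1:ℝ)).indicator mA).const_mul l
  have hindB : Integrable (Set.indicator
      {ω' | t₀ - T ω' ≤ Real.exp (∑ i, β i * Z ω' i) ∧ T ω' ≤ t₀} (fun _ => (1:ℝ))) μ :=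
    (integrable_const (1:ℝ)).indicator mB
  have hφint : Integrable ((fun ω => l * Set.indicator {ω' | T ω' ≤ t₀} (fun _ => (1:ℝ)) ω)
      - Set.indicator {ω' | t₀ - T ω' ≤ Real.exp (∑ i, β i * Z ω' i) ∧ T ω' ≤ t₀}
        (fun _ => (1:ℝ))) μ := hindA.sub hindB
  have hlsmul : (fun ω => l * Set.indicator {ω' | T ω' ≤ t₀} (fun _ => (1:ℝ)) ω)
      = l • Set.indicator {ω' | T ω' ≤ t₀} (fun _ => (1:ℝ)) := rfl
  have hcond0 : (μ[(fun ω => l * Set.indicator {ω' | T ω' ≤ t₀} (fun _ => (1:ℝ)) ω)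
      - Set.indicator {ω' | t₀ - T ω' ≤ Real.exp (∑ i, β i * Z ω' i) ∧ T ω' ≤ t₀}
        (fun _ => (1:ℝ)) | MeasurableSpace.comap Z inferInstance]) =ᵐ[μ] 0 := by
    have hsub := condExp_sub (m := MeasurableSpace.comap Z inferInstance) (μ := μ) hindA hindB
    have hsmul := condExp_smul (m := MeasurableSpace.comap Z inferInstance)
      (m₀ := ‹MeasurableSpace Ω›) (μ := μ) l
      (Set.indicator {ω' | T ω' ≤ t₀} (fun _ => (1:ℝ)))
    rw [hlsmul]
    filter_upwards [hsub, hsmul, hmodel] with ω h1 h2 h3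
    rw [hlsmul] at h1
    simp only [Pi.sub_apply] at h1 ⊢
    rw [h1, h2, h3]
    simp [Pi.smul_apply, smul_eq_mul]
  -- integrability and measurability of the reduced integrand
  have hg₂meas : Measurable (fun ω => ((if T ω ≤ t₀ then (1:ℝ) else 0)
      * (l - if t₀ - T ω ≤ Real.exp (∑ i, β i * Z ω i) then 1 else 0)) • Z ω) := by
    rw [measurable_pi_iff]
    intro i
    simp only [Pi.smul_apply, smul_eq_mul]
    refine Measurable.mul (Measurable.mul ?_ ?_) ((measurable_pi_apply i).comp hZ)
    · exact Measurable.ite (measurableSet_le hT measurable_const) measurable_const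
        measurable_const
    · exact measurable_const.sub (Measurable.ite (measurableSet_le (measurable_const.sub hT)
        (Real.measurable_exp.comp (Finset.measurable_sum _ fun j _ =>
          measurable_const.mul ((measurable_pi_apply j).comp hZ))))
        measurable_const measurable_const)
  have hg₂bound : ∀ ω, ‖((if T ω ≤ t₀ then (1:ℝ) else 0)
      * (l - if t₀ - T ω ≤ Real.exp (∑ i, β i * Z ω i) then 1 else 0)) • Z ω‖
      ≤ ‖‖Z ω‖ / G (Y ω)‖ := by
    intro ω
    rw [norm_smul, Real.norm_eq_abs (‖Z ω‖ / G (Y ω)),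
      abs_of_nonneg (div_nonneg (norm_nonneg _) (hG0 _))]
    by_cases h0 : T ω ≤ t₀
    · have hYle : Y ω ≤ t₀ := le_trans (by rw [hY ω]; exact min_le_left _ _) h0
      have hGY : 0 < G (Y ω) := hpos _ hYle
      have hs : ‖(if T ω ≤ t₀ then (1:ℝ) else 0)
          * (l - if t₀ - T ω ≤ Real.exp (∑ i, β i * Z ω i) then 1 else 0)‖ ≤ 1 := by
        rw [if_pos h0, one_mul, Real.norm_eq_abs]
        exact habs _ (by split <;> simp)
      calc ‖(if T ω ≤ t₀ then (1:ℝ) else 0)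
          * (l - if t₀ - T ω ≤ Real.exp (∑ i, β i * Z ω i) then 1 else 0)‖ * ‖Z ω‖
          ≤ 1 * ‖Z ω‖ := mul_le_mul_of_nonneg_right hs (norm_nonneg _)
        _ = ‖Z ω‖ := one_mul _
        _ ≤ ‖Z ω‖ / G (Y ω) := by
            rw [le_div_iff₀ hGY]
            exact mul_le_of_le_one_right (norm_nonneg _) (hG1 _)
    · rw [if_neg h0, zero_mul, norm_zero, zero_mul]
      exact div_nonneg (norm_nonneg _) (hG0 _)
  have hg₂int : Integrable (fun ω => ((if T ω ≤ t₀ then (1:ℝ) else 0)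
      * (l - if t₀ - T ω ≤ Real.exp (∑ i, β i * Z ω i) then 1 else 0)) • Z ω) μ :=
    hint.mono hg₂meas.aestronglyMeasurable (Filter.Eventually.of_forall hg₂bound)
  -- each component of the reduced integral vanishes
  have hcomp : ∀ i : Fin p, ∫ ω, (((if T ω ≤ t₀ then (1:ℝ) else 0)
      * (l - if t₀ - T ω ≤ Real.exp (∑ j, β j * Z ω j) then 1 else 0)) • Z ω) i ∂μ = 0 := by
    intro i
    have hptw : ∀ ω, (((if T ω ≤ t₀ then (1:ℝ) else 0)
        * (l - if t₀ - T ω ≤ Real.exp (∑ j, β j * Z ω j) then 1 else 0)) • Z ω) i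
        = ((fun ω => Z ω i) * ((fun ω => l * Set.indicator {ω' | T ω' ≤ t₀}
              (fun _ => (1:ℝ)) ω)
            - Set.indicator {ω' | t₀ - T ω' ≤ Real.exp (∑ j, β j * Z ω' j) ∧ T ω' ≤ t₀}
              (fun _ => (1:ℝ)))) ω := by
      intro ω
      simp only [Pi.smul_apply, smul_eq_mul, Pi.mul_apply, Pi.sub_apply]
      by_cases h0 : T ω ≤ t₀ <;>
        by_cases h1 : t₀ - T ω ≤ Real.exp (∑ j, β j * Z ω j) <;>
        simp only [Set.indicator_apply, Set.mem_setOf_eq, h0, h1, if_true, if_false,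
          and_true, and_false, true_and, false_and, and_self, not_true, not_false_iff,
          if_pos, if_neg, mul_one, mul_zero, sub_zero, ite_true, ite_false] <;> ring
    have hZφint : Integrable ((fun ω => Z ω i) * ((fun ω => l * Set.indicator {ω' | T ω' ≤ t₀}
              (fun _ => (1:ℝ)) ω)
            - Set.indicator {ω' | t₀ - T ω' ≤ Real.exp (∑ j, β j * Z ω' j) ∧ T ω' ≤ t₀}
              (fun _ => (1:ℝ)))) μ := by
      have hproj := (ContinuousLinearMap.proj (R := ℝ) (φ := fun _ : Fin p => ℝ)
        i).integrable_comp hg₂int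
      exact hproj.congr (Filter.Eventually.of_forall fun ω => hptw ω)
    have hpull := condExp_mul_of_stronglyMeasurable_left (hZsm i) hZφint hφint
    have hres : ∫ ω, ((fun ω => Z ω i) * ((fun ω => l * Set.indicator {ω' | T ω' ≤ t₀}
              (fun _ => (1:ℝ)) ω)
            - Set.indicator {ω' | t₀ - T ω' ≤ Real.exp (∑ j, β j * Z ω' j) ∧ T ω' ≤ t₀}
              (fun _ => (1:ℝ)))) ω ∂μ = 0 := by
      rw [← integral_condExp hmZle]
      rw [← integral_zero Ω ℝ (μ := μ)]
      refine integral_congr_ae ?_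
      filter_upwards [hpull, hcond0] with ω h1 h2
      rw [h1]
      simp only [Pi.mul_apply]
      rw [h2]
      simp
    rw [show (fun ω => (((if T ω ≤ t₀ then (1:ℝ) else 0)
        * (l - if t₀ - T ω ≤ Real.exp (∑ j, β j * Z ω j) then 1 else 0)) • Z ω) i)
      = fun ω => ((fun ω => Z ω i) * ((fun ω => l * Set.indicator {ω' | T ω' ≤ t₀}
              (fun _ => (1:ℝ)) ω)
            - Set.indicator {ω' | t₀ - T ω' ≤ Real.exp (∑ j, β j * Z ω' j) ∧ T ω' ≤ t₀}
              (fun _ => (1:ℝ)))) ω from funext hptw]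
    exact hres
  -- assemble everything
  rw [step1, step2]
  simp only [step3]
  rw [step4]
  rw [integral_congr_ae (Filter.Eventually.of_forall step5)]
  ext i
  have hproj := (ContinuousLinearMap.proj (R := ℝ) (φ := fun _ : Fin p => ℝ)
    i).integral_comp_comm hg₂int
  calc (∫ ω, ((if T ω ≤ t₀ then (1:ℝ) else 0)
      * (l - if t₀ - T ω ≤ Real.exp (∑ j, β j * Z ω j) then 1 else 0)) • Z ω ∂μ) i
      = ∫ ω, (((if T ω ≤ t₀ then (1:ℝ) else 0)
        * (l - if t₀ - T ω ≤ Real.exp (∑ j, β j * Z ω j) then 1 else 0)) • Z ω) i ∂μ :=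
        hproj.symm
    _ = 0 := hcomp i
end

section
/- For independent T and C with Y = min(T,C) and Δ = 1{T ≤ C}, and any bounded measurable function h, E[ Δ·1{Y ≤ t₀}·h(Y)/G(Y) ] = E[ 1{T ≤ t₀}·h(T) ], provided G(t) = P(C ≥ t) > 0 for all t ≤ t₀ in the support of T. -/
open MeasureTheory ProbabilityTheory
open scoped ENNReal NNReal

/-- For independent `T` and `C` with `Y = min(T,C)` and `Δ = 1{T ≤ C}`, and
any bounded measurable `h`, `E[ Δ·1{Y ≤ t₀}·h(Y)/G(Y) ] = E[ 1{T ≤ t₀}·h(T) ]`, provided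
`G(t) = P(C ≥ t) > 0` for all `t ≤ t₀` in the support of `T`. -/
theorem stmt14 {Ω : Type*} [MeasurableSpace Ω] (μ : Measure Ω) [IsProbabilityMeasure μ]
    (T C : Ω → ℝ) (hT : Measurable T) (hC : Measurable C)
    (hTnn : ∀ ω, 0 ≤ T ω) (hCnn : ∀ ω, 0 ≤ C ω)
    (hindep : IndepFun T C μ)
    (Y : Ω → ℝ) (hY : ∀ ω, Y ω = min (T ω) (C ω))
    (G : ℝ → ℝ) (hG : ∀ t, G t = (μ {ω | t ≤ C ω}).toReal)
    (t₀ : ℝ) (ht₀ : 0 < t₀)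
    (h : ℝ → ℝ) (hmeas : Measurable h) (M : ℝ) (hbdd : ∀ x, |h x| ≤ M)
    (hpos : ∀ᵐ ω ∂μ, T ω ≤ t₀ → 0 < G (T ω)) :
    ∫ ω, (if T ω ≤ C ω ∧ Y ω ≤ t₀ then h (Y ω) / G (Y ω) else 0) ∂μ
      = ∫ ω, (if T ω ≤ t₀ then h (T ω) else 0) ∂μ := by
  set ν₁ := μ.map T with hν₁
  set ν₂ := μ.map C with hν₂
  have hν₁prob : IsProbabilityMeasure ν₁ := Measure.isProbabilityMeasure_map hT.aemeasurable
  have hν₂prob : IsProbabilityMeasure ν₂ := Measure.isProbabilityMeasure_map hC.aemeasurable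
  -- G in terms of ν₂
  have hGalt : ∀ t, G t = (ν₂ (Set.Ici t)).toReal := by
    intro t
    rw [hG t, hν₂, Measure.map_apply hC measurableSet_Ici]
    rfl
  have hGnn : ∀ t, 0 ≤ G t := fun t => (hGalt t) ▸ ENNReal.toReal_nonneg
  have hGanti : Antitone G := by
    intro s t hst
    rw [hGalt s, hGalt t]
    exact ENNReal.toReal_mono (measure_ne_top _ _)
      (measure_mono (Set.Ici_subset_Ici.mpr hst))
  have hGmeas : Measurable G := hGanti.measurable
  have hGofReal : ∀ t, ν₂ (Set.Ici t) = ENNReal.ofReal (G t) := by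
    intro t
    rw [hGalt t, ENNReal.ofReal_toReal (measure_ne_top _ _)]
  -- the joint function
  set f : ℝ × ℝ → ℝ := fun p => if p.1 ≤ p.2 ∧ p.1 ≤ t₀ then h p.1 / G p.1 else 0 with hf
  have hset : MeasurableSet {p : ℝ × ℝ | p.1 ≤ p.2 ∧ p.1 ≤ t₀} :=
    (measurableSet_le measurable_fst measurable_snd).inter
      (measurable_fst measurableSet_Iic)
  have hfmeas : Measurable f :=
    Measurable.ite hset ((hmeas.comp measurable_fst).div (hGmeas.comp measurable_fst))
      measurable_const
  -- 0 ≤ M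
  have hM : 0 ≤ M := le_trans (abs_nonneg _) (hbdd 0)
  -- rewrite LHS integrand
  have hfun : (fun ω => if T ω ≤ C ω ∧ Y ω ≤ t₀ then h (Y ω) / G (Y ω) else 0)
      = fun ω => f (T ω, C ω) := by
    funext ω
    by_cases hc : T ω ≤ C ω
    · simp [hf, hY ω, min_eq_left hc, hc]
    · simp [hf, hc]
  -- joint law is product measure
  have hpair : μ.map (fun ω => (T ω, C ω)) = ν₁.prod ν₂ :=
    (indepFun_iff_map_prod_eq_prod_map_map hT.aemeasurable hC.aemeasurable).mp hindep
  -- integrability of f on the product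
  have hint : Integrable f (ν₁.prod ν₂) := by
    refine ⟨hfmeas.aestronglyMeasurable, ?_⟩
    rw [HasFiniteIntegral, lintegral_prod _ hfmeas.enorm.aemeasurable]
    have hbound : ∀ t : ℝ, ∫⁻ c, (‖f (t, c)‖₊ : ℝ≥0∞) ∂ν₂ ≤ ENNReal.ofReal M := by
      intro t
      by_cases ht : t ≤ t₀
      · have : (fun c => (‖f (t, c)‖₊ : ℝ≥0∞))
            = (Set.Ici t).indicator (fun _ => (‖h t / G t‖₊ : ℝ≥0∞)) := by
          funext c
          by_cases hc : t ≤ c <;> simp [hf, hc, ht, Set.indicator]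
        rw [this, lintegral_indicator measurableSet_Ici, setLIntegral_const]
        by_cases hGz : G t = 0
        · simp [hGz]
        · have hGpos : 0 < G t := lt_of_le_of_ne (hGnn t) (Ne.symm hGz)
          rw [hGofReal t, ← enorm_eq_nnnorm, Real.enorm_eq_ofReal_abs,
            ← ENNReal.ofReal_mul (abs_nonneg _)]
          apply ENNReal.ofReal_le_ofReal
          rw [abs_div, abs_of_nonneg (hGnn t), div_mul_cancel₀ _ hGz]
          exact hbdd t
      · have : (fun c => (‖f (t, c)‖₊ : ℝ≥0∞)) = fun _ => 0 := by
          funext c; simp [hf, ht]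
        rw [this, lintegral_zero]
        exact zero_le
    calc ∫⁻ t, ∫⁻ c, (‖f (t, c)‖₊ : ℝ≥0∞) ∂ν₂ ∂ν₁
        ≤ ∫⁻ _, ENNReal.ofReal M ∂ν₁ := lintegral_mono hbound
      _ = ENNReal.ofReal M := by simp
      _ < ⊤ := ENNReal.ofReal_lt_top
  -- compute the inner integral
  have hinner : ∀ t : ℝ, ∫ c, f (t, c) ∂ν₂ = if t ≤ t₀ then G t * (h t / G t) else 0 := by
    intro t
    by_cases ht : t ≤ t₀
    · have : (fun c => f (t, c)) = (Set.Ici t).indicator (fun _ => h t / G t) := by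
        funext c
        by_cases hc : t ≤ c <;> simp [hf, hc, ht, Set.indicator]
      rw [this, integral_indicator_const _ measurableSet_Ici, smul_eq_mul, measureReal_def, ← hGalt t,
        if_pos ht]
    · have : (fun c => f (t, c)) = fun _ => (0 : ℝ) := by
        funext c; simp [hf, ht]
      rw [this, integral_zero, if_neg ht]
  -- measurability of the RHS integrand
  have hgmeas : Measurable (fun t => if t ≤ t₀ then h t else 0) :=
    Measurable.ite measurableSet_Iic hmeas measurable_const
  -- transfer positivity to ν₁
  have hposset : MeasurableSet {t : ℝ | t ≤ t₀ → 0 < G t} := by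
    have : {t : ℝ | t ≤ t₀ → 0 < G t} = {t | t ≤ t₀}ᶜ ∪ {t | 0 < G t} := by
      ext t; simp [imp_iff_not_or]
    rw [this]
    exact (measurableSet_Iic.compl).union (measurableSet_lt measurable_const hGmeas)
  have hpos' : ∀ᵐ t ∂ν₁, t ≤ t₀ → 0 < G t :=
    (ae_map_iff hT.aemeasurable hposset).mpr hpos
  -- put it together
  calc ∫ ω, (if T ω ≤ C ω ∧ Y ω ≤ t₀ then h (Y ω) / G (Y ω) else 0) ∂μ
      = ∫ ω, f (T ω, C ω) ∂μ := by rw [hfun]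
    _ = ∫ p, f p ∂(μ.map (fun ω => (T ω, C ω))) :=
        (integral_map (hT.prodMk hC).aemeasurable hfmeas.aestronglyMeasurable).symm
    _ = ∫ p, f p ∂(ν₁.prod ν₂) := by rw [hpair]
    _ = ∫ t, ∫ c, f (t, c) ∂ν₂ ∂ν₁ := integral_prod f hint
    _ = ∫ t, (if t ≤ t₀ then G t * (h t / G t) else 0) ∂ν₁ := by
        exact integral_congr_ae (Filter.Eventually.of_forall hinner)
    _ = ∫ t, (if t ≤ t₀ then h t else 0) ∂ν₁ := by
        refine integral_congr_ae ?_
        filter_upwards [hpos'] with t ht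
        by_cases ht' : t ≤ t₀
        · rw [if_pos ht', if_pos ht', mul_comm, div_mul_cancel₀ _ (ht ht').ne']
        · rw [if_neg ht', if_neg ht']
    _ = ∫ ω, (if T ω ≤ t₀ then h (T ω) else 0) ∂μ :=
        integral_map hT.aemeasurable hgmeas.aestronglyMeasurable
end
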